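/- arXiv:0910.1570 — 2 statements merged into one kernel-verified Lean document; each statement's English description precedes it below -/
import Mathlib

section
/- Under the assumptions ν₁ F(v) ≤ σ(v,v') ≤ ν₂ F(v) with ∫ F = 1 and L(F) = 0, for any f ∈ L²_{F^{-1}}(ℝ^N) with ⟨f⟩ = ∫ f dv, one has ∫ L(f)(f/F) dv ≤ -ν₁ ∫ |f - ⟨f⟩ F|² / F dv. -/
open MeasureTheory Real Set Filter

theorem spectral_gap_estimate
    (N : ℕ) (σ : EuclideanSpace ℝ (Fin N) → EuclideanSpace ℝ (Fin N) → ℝ)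
    (hσmeas : Measurable (Function.uncurry σ))
    (F : EuclideanSpace ℝ (Fin N) → ℝ) (hFpos : ∀ v, 0 < F v)
    (hFint : Integrable F) (hFmass : ∫ v, F v = 1)
    (ν₁ ν₂ : ℝ) (hν₁ : 0 < ν₁) (hν₁₂ : ν₁ ≤ ν₂)
    (hσbdd : ∀ v v', ν₁ * F v ≤ σ v v' ∧ σ v v' ≤ ν₂ * F v)
    (hLF : ∀ v, (∫ v', σ v v' * F v' - σ v' v * F v) = 0)
    (f : EuclideanSpace ℝ (Fin N) → ℝ)
    (hfmeas : AEMeasurable f)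
    (hfL2 : Integrable (fun v => (f v) ^ 2 / F v)) :
    (∫ v, (∫ v', σ v v' * f v' - σ v' v * f v) * (f v / F v))
      ≤ -ν₁ * ∫ v, (f v - (∫ v', f v') * F v) ^ 2 / F v := by
  have hFne : ∀ v, F v ≠ 0 := fun v => (hFpos v).ne'
  have hFm : AEStronglyMeasurable F volume := hFint.1
  have hfm : AEStronglyMeasurable f volume := hfmeas.aestronglyMeasurable
  have hσnonneg : ∀ v v', 0 ≤ σ v v' :=
    fun v v' => le_trans (mul_nonneg hν₁.le (hFpos v).le) (hσbdd v v').1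
  set c : ℝ := ∫ v', f v' with hc
  set g : EuclideanSpace ℝ (Fin N) → ℝ := fun v => f v - c * F v with hgdef
  -- f is integrable
  have hfInt : Integrable f := by
    refine Integrable.mono' ((hfL2.add hFint).div_const 2) hfm (ae_of_all _ fun v => ?_)
    have hF := hFpos v
    have h2 : f v ^ 2 / F v * F v = f v ^ 2 := div_mul_cancel₀ _ (hFne v)
    simp only [Pi.add_apply, Real.norm_eq_abs]
    rw [le_div_iff₀ (by norm_num : (0:ℝ) < 2)]
    nlinarith [sq_nonneg (|f v| - F v), sq_abs (f v)]
  have hgInt : Integrable g := hfInt.sub (hFint.const_mul c)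
  have hgm : AEStronglyMeasurable g volume := hgInt.1
  have hgzero : ∫ v, g v = 0 := by
    simp only [hgdef]
    rw [integral_sub hfInt (hFint.const_mul c), integral_const_mul, hFmass, mul_one, ← hc,
      sub_self]
  have hgL2 : Integrable (fun v => g v ^ 2 / F v) := by
    have e : (fun v => g v ^ 2 / F v) = fun v => f v ^ 2 / F v - (2 * c) * f v + c ^ 2 * F v := by
      funext v
      have h := hFne v
      field_simp [hgdef]
      ring
    rw [e]
    exact (hfL2.sub (hfInt.const_mul _)).add (hFint.const_mul _)
  -- the collision frequency S
  set S : EuclideanSpace ℝ (Fin N) → ℝ := fun v => ∫ v', σ v' v with hSdef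
  have hSm : StronglyMeasurable S := by
    have h : Measurable (fun p : EuclideanSpace ℝ (Fin N) × EuclideanSpace ℝ (Fin N) =>
        σ p.2 p.1) := hσmeas.comp measurable_swap
    exact h.stronglyMeasurable.integral_prod_right'
  have hσv : ∀ v, Integrable (fun u => σ u v) := by
    intro v
    refine Integrable.mono' (hFint.const_mul ν₂)
      (hσmeas.comp (measurable_id.prodMk measurable_const)).aestronglyMeasurable
      (ae_of_all _ fun u => ?_)
    rw [Real.norm_eq_abs, abs_of_nonneg (hσnonneg u v)]
    exact (hσbdd u v).2
  have hS1 : ∀ v, ν₁ ≤ S v := by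
    intro v
    have : ν₁ = ∫ v', ν₁ * F v' := by rw [integral_const_mul, hFmass, mul_one]
    rw [this]
    exact integral_mono (hFint.const_mul ν₁) (hσv v) fun v' => (hσbdd v' v).1
  have hS2 : ∀ v, S v ≤ ν₂ := by
    intro v
    have : ν₂ = ∫ v', ν₂ * F v' := by rw [integral_const_mul, hFmass, mul_one]
    rw [show S v = ∫ v', σ v' v from rfl, this]
    exact integral_mono (hσv v) (hFint.const_mul ν₂) fun v' => (hσbdd v' v).2
  -- integrability of kernel against integrable functions (second variable)
  have hmul2 : ∀ (v : EuclideanSpace ℝ (Fin N)) (w : EuclideanSpace ℝ (Fin N) → ℝ),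
      AEStronglyMeasurable w volume → Integrable w → Integrable (fun v' => σ v v' * w v') := by
    intro v w hwm hwI
    refine Integrable.mono' (hwI.norm.const_mul (ν₂ * F v))
      (((hσmeas.comp (measurable_const.prodMk measurable_id)).aestronglyMeasurable).mul hwm)
      (ae_of_all _ fun v' => ?_)
    rw [norm_mul, Real.norm_eq_abs (σ v v'), abs_of_nonneg (hσnonneg v v')]
    exact mul_le_mul_of_nonneg_right (hσbdd v v').2 (norm_nonneg _)
  have hSF : ∀ v, (∫ v', σ v v' * F v') = S v * F v := by
    intro v
    have h := hLF v
    rw [integral_sub (hmul2 v F hFm hFint) ((hσv v).mul_const (F v)), sub_eq_zero] at h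
    rw [h, integral_mul_const]
  -- the gain term
  set A : EuclideanSpace ℝ (Fin N) → ℝ := fun v => ∫ v', σ v v' * g v' with hAdef
  have hAm : AEStronglyMeasurable A volume := by
    have h : AEStronglyMeasurable
        (fun p : EuclideanSpace ℝ (Fin N) × EuclideanSpace ℝ (Fin N) => σ p.1 p.2 * g p.2)
        (volume.prod volume) := (hσmeas.aestronglyMeasurable).mul hgm.comp_snd
    exact h.integral_prod_right'
  have hAbound : ∀ v, |A v| ≤ ν₂ * (∫ v', |g v'|) * F v := by
    intro v
    calc |A v| ≤ ∫ v', |σ v v' * g v'| := by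
          rw [hAdef]
          simpa only [Real.norm_eq_abs] using
            norm_integral_le_integral_norm (μ := volume) (fun v' => σ v v' * g v')
      _ ≤ ∫ v', (ν₂ * F v) * |g v'| := by
          refine integral_mono (hmul2 v g hgm hgInt).abs (hgInt.abs.const_mul _) fun v' => ?_
          rw [abs_mul, abs_of_nonneg (hσnonneg v v')]
          exact mul_le_mul_of_nonneg_right (hσbdd v v').2 (abs_nonneg _)
      _ = ν₂ * (∫ v', |g v'|) * F v := by rw [integral_const_mul]; ring
  have hAInt : Integrable A := by
    refine Integrable.mono' (hFint.const_mul (ν₂ * ∫ v', |g v'|)) hAm (ae_of_all _ fun v => ?_)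
    rw [Real.norm_eq_abs]
    exact hAbound v
  -- generic product-integrability criterion
  have hprod : ∀ (H : EuclideanSpace ℝ (Fin N) × EuclideanSpace ℝ (Fin N) → ℝ),
      AEStronglyMeasurable H (volume.prod volume) → ∀ (C : ℝ)
      (u w : EuclideanSpace ℝ (Fin N) → ℝ), Integrable u → Integrable w →
      (∀ p, |H p| ≤ C * (|u p.1| * |w p.2|)) → Integrable H (volume.prod volume) := by
    intro H hm C u w hu hw hb
    refine Integrable.mono' ((hu.abs.mul_prod hw.abs).const_mul C) hm (ae_of_all _ fun p => ?_)
    rw [Real.norm_eq_abs]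
    exact hb p
  -- kernel products integrable on the product space
  have hP0Int : Integrable (fun p : EuclideanSpace ℝ (Fin N) × EuclideanSpace ℝ (Fin N) =>
      σ p.1 p.2 * g p.2) (volume.prod volume) := by
    refine hprod _ ((hσmeas.aestronglyMeasurable).mul hgm.comp_snd) ν₂ F g hFint hgInt fun p => ?_
    rw [abs_mul, abs_of_nonneg (hσnonneg p.1 p.2), abs_of_nonneg (hFpos p.1).le]
    exact le_trans (mul_le_mul_of_nonneg_right (hσbdd p.1 p.2).2 (abs_nonneg _))
      (le_of_eq (mul_assoc _ _ _))
  have hSgInt : Integrable (fun v => S v * g v) := by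
    refine Integrable.mono' (hgInt.abs.const_mul ν₂) (hSm.aestronglyMeasurable.mul hgm)
      (ae_of_all _ fun v => ?_)
    rw [norm_mul, Real.norm_eq_abs (S v), abs_of_nonneg (le_trans hν₁.le (hS1 v))]
    exact mul_le_mul_of_nonneg_right (hS2 v) (norm_nonneg _)
  have hintA : ∫ v, A v = ∫ v, S v * g v := by
    have h2 := integral_integral_swap (f := fun v v' => σ v v' * g v') hP0Int
    have h3 : ∫ v', (∫ v, σ v v' * g v') = ∫ v', S v' * g v' :=
      integral_congr_ae (ae_of_all _ fun v' => integral_mul_const _ _)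
    exact h2.trans h3
  have hA0 : ∫ v, (A v - S v * g v) = 0 := by
    rw [integral_sub hAInt hSgInt, hintA, sub_self]
  -- inner integral identity
  have hInnerEq : ∀ v, (∫ v', σ v v' * f v' - σ v' v * f v) = A v - S v * g v := by
    intro v
    have e1 : ∀ v', σ v v' * f v' - σ v' v * f v
        = (σ v v' * g v' - σ v' v * g v) + c * (σ v v' * F v' - σ v' v * F v) := by
      intro v'
      simp only [hgdef]
      ring
    calc (∫ v', σ v v' * f v' - σ v' v * f v)
        = ∫ v', ((σ v v' * g v' - σ v' v * g v) + c * (σ v v' * F v' - σ v' v * F v)) :=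
          integral_congr_ae (ae_of_all _ e1)
      _ = (∫ v', (σ v v' * g v' - σ v' v * g v))
            + c * (∫ v', (σ v v' * F v' - σ v' v * F v)) := by
          have I1 : Integrable (fun v' => σ v v' * g v' - σ v' v * g v) :=
            (hmul2 v g hgm hgInt).sub ((hσv v).mul_const (g v))
          have I2 : Integrable (fun v' => c * (σ v v' * F v' - σ v' v * F v)) :=
            ((hmul2 v F hFm hFint).sub ((hσv v).mul_const (F v))).const_mul c
          rw [integral_add I1 I2, integral_const_mul]
      _ = A v - S v * g v := by
          have I1 : Integrable (fun v' => σ v v' * g v') := hmul2 v g hgm hgInt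
          have I2 : Integrable (fun v' => σ v' v * g v) := (hσv v).mul_const (g v)
          rw [hLF v, mul_zero, add_zero, integral_sub I1 I2, integral_mul_const]
  -- more product integrability
  have hgFm : AEStronglyMeasurable (fun v => g v / F v) volume :=
    (hgm.aemeasurable.div hFm.aemeasurable).aestronglyMeasurable
  have hg2F2m : AEStronglyMeasurable (fun v => g v ^ 2 / F v ^ 2) volume :=
    ((hgm.aemeasurable.pow_const 2).div (hFm.aemeasurable.pow_const 2)).aestronglyMeasurable
  have hP1Int : Integrable (fun p : EuclideanSpace ℝ (Fin N) × EuclideanSpace ℝ (Fin N) =>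
      σ p.1 p.2 * g p.2 * (g p.1 / F p.1)) (volume.prod volume) := by
    refine hprod _ (((hσmeas.aestronglyMeasurable).mul hgm.comp_snd).mul hgFm.comp_fst)
      ν₂ g g hgInt hgInt fun p => ?_
    have hF := hFpos p.1
    rw [abs_mul, abs_mul, abs_div, abs_of_nonneg (hσnonneg p.1 p.2), abs_of_nonneg hF.le]
    calc σ p.1 p.2 * |g p.2| * (|g p.1| / F p.1)
        ≤ (ν₂ * F p.1) * |g p.2| * (|g p.1| / F p.1) :=
          mul_le_mul_of_nonneg_right
            (mul_le_mul_of_nonneg_right (hσbdd p.1 p.2).2 (abs_nonneg _))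
            (div_nonneg (abs_nonneg _) hF.le)
      _ = ν₂ * (|g p.1| * |g p.2|) := by field_simp
  have hPmidInt : Integrable (fun p : EuclideanSpace ℝ (Fin N) × EuclideanSpace ℝ (Fin N) =>
      (σ p.1 p.2 - ν₁ * F p.1) * g p.2 * (g p.1 / F p.1)) (volume.prod volume) := by
    refine hprod _ ((((hσmeas.aestronglyMeasurable).sub (hFm.comp_fst.const_mul ν₁)).mul
      hgm.comp_snd).mul hgFm.comp_fst) ν₂ g g hgInt hgInt fun p => ?_
    have hF := hFpos p.1
    have h0 : 0 ≤ σ p.1 p.2 - ν₁ * F p.1 := sub_nonneg.2 (hσbdd p.1 p.2).1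
    have h2 : σ p.1 p.2 - ν₁ * F p.1 ≤ ν₂ * F p.1 :=
      le_trans (sub_le_self _ (mul_nonneg hν₁.le hF.le)) (hσbdd p.1 p.2).2
    rw [abs_mul, abs_mul, abs_div, abs_of_nonneg h0, abs_of_nonneg hF.le]
    calc (σ p.1 p.2 - ν₁ * F p.1) * |g p.2| * (|g p.1| / F p.1)
        ≤ (ν₂ * F p.1) * |g p.2| * (|g p.1| / F p.1) :=
          mul_le_mul_of_nonneg_right
            (mul_le_mul_of_nonneg_right h2 (abs_nonneg _))
            (div_nonneg (abs_nonneg _) hF.le)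
      _ = ν₂ * (|g p.1| * |g p.2|) := by field_simp
  have hP3Int : Integrable (fun p : EuclideanSpace ℝ (Fin N) × EuclideanSpace ℝ (Fin N) =>
      (σ p.1 p.2 - ν₁ * F p.1) * (g p.2 ^ 2 / F p.2)) (volume.prod volume) := by
    refine hprod _ (((hσmeas.aestronglyMeasurable).sub (hFm.comp_fst.const_mul ν₁)).mul
      hgL2.1.comp_snd) ν₂ F (fun v => g v ^ 2 / F v) hFint hgL2 fun p => ?_
    have h0 : 0 ≤ σ p.1 p.2 - ν₁ * F p.1 := sub_nonneg.2 (hσbdd p.1 p.2).1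
    have h2 : σ p.1 p.2 - ν₁ * F p.1 ≤ ν₂ * F p.1 :=
      le_trans (sub_le_self _ (mul_nonneg hν₁.le (hFpos p.1).le)) (hσbdd p.1 p.2).2
    rw [abs_mul, abs_of_nonneg h0]
    calc (σ p.1 p.2 - ν₁ * F p.1) * |g p.2 ^ 2 / F p.2|
        ≤ (ν₂ * F p.1) * |g p.2 ^ 2 / F p.2| :=
          mul_le_mul_of_nonneg_right h2 (abs_nonneg _)
      _ = ν₂ * (|F p.1| * |g p.2 ^ 2 / F p.2|) := by
          rw [abs_of_nonneg (hFpos p.1).le, mul_assoc]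
  have hP4Int : Integrable (fun p : EuclideanSpace ℝ (Fin N) × EuclideanSpace ℝ (Fin N) =>
      (σ p.1 p.2 - ν₁ * F p.1) * F p.2 * (g p.1 ^ 2 / F p.1 ^ 2)) (volume.prod volume) := by
    refine hprod _ ((((hσmeas.aestronglyMeasurable).sub (hFm.comp_fst.const_mul ν₁)).mul
      hFm.comp_snd).mul hg2F2m.comp_fst) ν₂ (fun v => g v ^ 2 / F v) F hgL2 hFint fun p => ?_
    have hF1 := hFpos p.1
    have hF2 := hFpos p.2
    have h0 : 0 ≤ σ p.1 p.2 - ν₁ * F p.1 := sub_nonneg.2 (hσbdd p.1 p.2).1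
    have h2 : σ p.1 p.2 - ν₁ * F p.1 ≤ ν₂ * F p.1 :=
      le_trans (sub_le_self _ (mul_nonneg hν₁.le hF1.le)) (hσbdd p.1 p.2).2
    rw [abs_mul, abs_mul, abs_of_nonneg h0, abs_of_nonneg hF2.le,
      abs_of_nonneg (div_nonneg (sq_nonneg (g p.1)) (sq_nonneg (F p.1))),
      abs_of_nonneg (div_nonneg (sq_nonneg (g p.1)) hF1.le)]
    calc (σ p.1 p.2 - ν₁ * F p.1) * F p.2 * (g p.1 ^ 2 / F p.1 ^ 2)
        ≤ (ν₂ * F p.1) * F p.2 * (g p.1 ^ 2 / F p.1 ^ 2) :=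
          mul_le_mul_of_nonneg_right (mul_le_mul_of_nonneg_right h2 hF2.le)
            (div_nonneg (sq_nonneg _) (sq_nonneg _))
      _ = ν₂ * (g p.1 ^ 2 / F p.1 * F p.2) := by field_simp
  -- Young's inequality pointwise on the product
  have eY : ∀ p : EuclideanSpace ℝ (Fin N) × EuclideanSpace ℝ (Fin N),
      (σ p.1 p.2 - ν₁ * F p.1) * g p.2 * (g p.1 / F p.1)
        ≤ 1/2 * ((σ p.1 p.2 - ν₁ * F p.1) * (g p.2 ^ 2 / F p.2))
          + 1/2 * ((σ p.1 p.2 - ν₁ * F p.1) * F p.2 * (g p.1 ^ 2 / F p.1 ^ 2)) := by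
    intro p
    have h1 := hFpos p.1
    have h2 := hFpos p.2
    have hs : 0 ≤ σ p.1 p.2 - ν₁ * F p.1 := sub_nonneg.2 (hσbdd p.1 p.2).1
    have key : g p.2 * (g p.1 / F p.1)
        ≤ 1/2 * (g p.2 ^ 2 / F p.2) + 1/2 * (F p.2 * (g p.1 ^ 2 / F p.1 ^ 2)) := by
      have hden : (0:ℝ) ≤ (g p.2 * F p.1 - F p.2 * g p.1) ^ 2 / (2 * F p.2 * F p.1 ^ 2) :=
        div_nonneg (sq_nonneg _)
          (mul_nonneg (mul_nonneg (by norm_num) h2.le) (sq_nonneg _))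
      have e : 1/2 * (g p.2 ^ 2 / F p.2) + 1/2 * (F p.2 * (g p.1 ^ 2 / F p.1 ^ 2))
          - g p.2 * (g p.1 / F p.1)
          = (g p.2 * F p.1 - F p.2 * g p.1) ^ 2 / (2 * F p.2 * F p.1 ^ 2) := by
        field_simp
        ring
      linarith
    calc (σ p.1 p.2 - ν₁ * F p.1) * g p.2 * (g p.1 / F p.1)
        = (σ p.1 p.2 - ν₁ * F p.1) * (g p.2 * (g p.1 / F p.1)) := by ring
      _ ≤ (σ p.1 p.2 - ν₁ * F p.1) *
          (1/2 * (g p.2 ^ 2 / F p.2) + 1/2 * (F p.2 * (g p.1 ^ 2 / F p.1 ^ 2))) :=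
          mul_le_mul_of_nonneg_left key hs
      _ = _ := by ring
  -- evaluation of the two quadratic product integrals
  have hIP3 : (∫ p : EuclideanSpace ℝ (Fin N) × EuclideanSpace ℝ (Fin N),
      (σ p.1 p.2 - ν₁ * F p.1) * (g p.2 ^ 2 / F p.2) ∂(volume.prod volume))
      = ∫ v, (S v - ν₁) * (g v ^ 2 / F v) := by
    rw [integral_prod_symm _ hP3Int]
    refine integral_congr_ae (ae_of_all _ fun y => ?_)
    show (∫ x, (σ x y - ν₁ * F x) * (g y ^ 2 / F y)) = (S y - ν₁) * (g y ^ 2 / F y)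
    have I1 : Integrable (fun x => σ x y) := hσv y
    have I2 : Integrable (fun x => ν₁ * F x) := hFint.const_mul ν₁
    rw [integral_mul_const, integral_sub I1 I2, integral_const_mul, hFmass, mul_one]
  have hIP4 : (∫ p : EuclideanSpace ℝ (Fin N) × EuclideanSpace ℝ (Fin N),
      (σ p.1 p.2 - ν₁ * F p.1) * F p.2 * (g p.1 ^ 2 / F p.1 ^ 2) ∂(volume.prod volume))
      = ∫ v, (S v - ν₁) * (g v ^ 2 / F v) := by
    rw [integral_prod _ hP4Int]
    refine integral_congr_ae (ae_of_all _ fun x => ?_)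
    show (∫ y, (σ x y - ν₁ * F x) * F y * (g x ^ 2 / F x ^ 2)) = (S x - ν₁) * (g x ^ 2 / F x)
    have e : ∀ y, (σ x y - ν₁ * F x) * F y = σ x y * F y - (ν₁ * F x) * F y := fun y => by ring
    have I1 : Integrable (fun y => σ x y * F y) := hmul2 x F hFm hFint
    have I2 : Integrable (fun y => (ν₁ * F x) * F y) := hFint.const_mul _
    rw [integral_mul_const]
    rw [show (∫ y, (σ x y - ν₁ * F x) * F y) = ∫ y, (σ x y * F y - (ν₁ * F x) * F y) from
      integral_congr_ae (ae_of_all _ e)]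
    rw [integral_sub I1 I2, hSF x, integral_const_mul, hFmass, mul_one]
    have h := hFne x
    field_simp
  -- integrability of the weighted quadratic terms
  have hSg2Int : Integrable (fun v => S v * (g v ^ 2 / F v)) := by
    refine Integrable.mono' (hgL2.abs.const_mul ν₂) (hSm.aestronglyMeasurable.mul hgL2.1)
      (ae_of_all _ fun v => ?_)
    rw [norm_mul, Real.norm_eq_abs (S v), abs_of_nonneg (le_trans hν₁.le (hS1 v))]
    exact mul_le_mul_of_nonneg_right (hS2 v) (norm_nonneg _)
  have hWInt : Integrable (fun v => (S v - ν₁) * (g v ^ 2 / F v)) := by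
    have e : (fun v => (S v - ν₁) * (g v ^ 2 / F v))
        = fun v => S v * (g v ^ 2 / F v) - ν₁ * (g v ^ 2 / F v) := funext fun v => by ring
    rw [e]
    exact hSg2Int.sub (hgL2.const_mul ν₁)
  -- the cross term estimate
  have hAgFInt : Integrable (fun v => A v * (g v / F v)) := by
    refine Integrable.mono' (hgInt.abs.const_mul (ν₂ * ∫ v', |g v'|)) (hAm.mul hgFm)
      (ae_of_all _ fun v => ?_)
    rw [norm_mul, Real.norm_eq_abs (A v), Real.norm_eq_abs, abs_div,
      abs_of_nonneg (hFpos v).le]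
    calc |A v| * (|g v| / F v)
        ≤ (ν₂ * (∫ v', |g v'|) * F v) * (|g v| / F v) :=
          mul_le_mul_of_nonneg_right (hAbound v) (div_nonneg (abs_nonneg _) (hFpos v).le)
      _ = ν₂ * (∫ v', |g v'|) * |g v| := by
          have h := hFne v
          field_simp
  have hcross : ∫ v, A v * (g v / F v) ≤ ∫ v, (S v - ν₁) * (g v ^ 2 / F v) := by
    have eA : ∫ v, A v * (g v / F v)
        = ∫ p : EuclideanSpace ℝ (Fin N) × EuclideanSpace ℝ (Fin N),
            σ p.1 p.2 * g p.2 * (g p.1 / F p.1) ∂(volume.prod volume) := by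
      have h1 : ∫ v, A v * (g v / F v) = ∫ v, ∫ v', σ v v' * g v' * (g v / F v) := by
        refine integral_congr_ae (ae_of_all _ fun v => ?_)
        show (∫ v', σ v v' * g v') * (g v / F v) = _
        exact (integral_mul_const _ _).symm
      have h2 := integral_integral (f := fun v v' => σ v v' * g v' * (g v / F v)) hP1Int
      exact h1.trans h2
    rw [eA]
    have edec : ∀ p : EuclideanSpace ℝ (Fin N) × EuclideanSpace ℝ (Fin N),
        σ p.1 p.2 * g p.2 * (g p.1 / F p.1)
          = (σ p.1 p.2 - ν₁ * F p.1) * g p.2 * (g p.1 / F p.1) + ν₁ * (g p.1 * g p.2) := by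
      intro p
      have h := hFne p.1
      field_simp
      ring
    have hP5Int : Integrable (fun p : EuclideanSpace ℝ (Fin N) × EuclideanSpace ℝ (Fin N) =>
        ν₁ * (g p.1 * g p.2)) (volume.prod volume) := (hgInt.mul_prod hgInt).const_mul ν₁
    calc (∫ p : EuclideanSpace ℝ (Fin N) × EuclideanSpace ℝ (Fin N),
          σ p.1 p.2 * g p.2 * (g p.1 / F p.1) ∂(volume.prod volume))
        = ∫ p : EuclideanSpace ℝ (Fin N) × EuclideanSpace ℝ (Fin N),
            ((σ p.1 p.2 - ν₁ * F p.1) * g p.2 * (g p.1 / F p.1)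
              + ν₁ * (g p.1 * g p.2)) ∂(volume.prod volume) :=
          integral_congr_ae (ae_of_all _ edec)
      _ = (∫ p : EuclideanSpace ℝ (Fin N) × EuclideanSpace ℝ (Fin N),
            (σ p.1 p.2 - ν₁ * F p.1) * g p.2 * (g p.1 / F p.1) ∂(volume.prod volume))
          + ν₁ * ((∫ v, g v) * (∫ v, g v)) := by
          rw [integral_add hPmidInt hP5Int, integral_const_mul, integral_prod_mul]
      _ = ∫ p : EuclideanSpace ℝ (Fin N) × EuclideanSpace ℝ (Fin N),
            (σ p.1 p.2 - ν₁ * F p.1) * g p.2 * (g p.1 / F p.1) ∂(volume.prod volume) := by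
          rw [hgzero]
          ring
      _ ≤ ∫ p : EuclideanSpace ℝ (Fin N) × EuclideanSpace ℝ (Fin N),
            (1/2 * ((σ p.1 p.2 - ν₁ * F p.1) * (g p.2 ^ 2 / F p.2))
              + 1/2 * ((σ p.1 p.2 - ν₁ * F p.1) * F p.2 * (g p.1 ^ 2 / F p.1 ^ 2)))
            ∂(volume.prod volume) :=
          integral_mono hPmidInt ((hP3Int.const_mul (1/2)).add (hP4Int.const_mul (1/2))) eY
      _ = ∫ v, (S v - ν₁) * (g v ^ 2 / F v) := by
          rw [integral_add (hP3Int.const_mul (1/2)) (hP4Int.const_mul (1/2)),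
            integral_const_mul, integral_const_mul, hIP3, hIP4]
          ring
  -- final assembly
  have hH1Int : Integrable (fun v => (A v - S v * g v) * (g v / F v)) := by
    have e : (fun v => (A v - S v * g v) * (g v / F v))
        = fun v => A v * (g v / F v) - S v * (g v ^ 2 / F v) := funext fun v => by ring
    rw [e]
    exact hAgFInt.sub hSg2Int
  have hH2Int : Integrable (fun v => c * (A v - S v * g v)) := (hAInt.sub hSgInt).const_mul c
  have hmain : (∫ v, (∫ v', σ v v' * f v' - σ v' v * f v) * (f v / F v))
      = ∫ v, ((A v - S v * g v) * (g v / F v) + c * (A v - S v * g v)) := by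
    refine integral_congr_ae (ae_of_all _ fun v => ?_)
    show (∫ v', σ v v' * f v' - σ v' v * f v) * (f v / F v)
        = (A v - S v * g v) * (g v / F v) + c * (A v - S v * g v)
    rw [hInnerEq v]
    have hfgF : f v / F v = g v / F v + c := by
      simp only [hgdef]
      field_simp [hFne v]
      ring
    rw [hfgF]
    ring
  rw [hmain, integral_add hH1Int hH2Int, integral_const_mul, hA0, mul_zero, add_zero]
  show _ ≤ -ν₁ * ∫ v, g v ^ 2 / F v
  calc ∫ v, ((A v - S v * g v) * (g v / F v))
      = (∫ v, A v * (g v / F v)) - ∫ v, S v * (g v ^ 2 / F v) := by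
        rw [show (fun v => (A v - S v * g v) * (g v / F v))
            = fun v => A v * (g v / F v) - S v * (g v ^ 2 / F v) from funext fun v => by ring,
          integral_sub hAgFInt hSg2Int]
    _ ≤ (∫ v, (S v - ν₁) * (g v ^ 2 / F v)) - ∫ v, S v * (g v ^ 2 / F v) := by
        linarith [hcross]
    _ = -ν₁ * ∫ v, g v ^ 2 / F v := by
        rw [← integral_sub hWInt hSg2Int,
          show (fun v => (S v - ν₁) * (g v ^ 2 / F v) - S v * (g v ^ 2 / F v))
            = fun v => -ν₁ * (g v ^ 2 / F v) from funext fun v => by ring,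
          integral_const_mul]
end

section
/- Let ν : ℝ^N × ℝ^N → ℝ with ν₁ ≤ ν ≤ ν₂ (positive constants), ν C¹ in x with ‖D_x ν‖_∞ ≤ M. Define p^ε(x,v,z) = exp(-∫_0^z ν(x+εvs,v) ds) ν(x+εvz,v) and p⁰(x,v,z) = e^{-zν(x,v)} ν(x,v). Then there is a constant C (depending on ν₁, ν₂, M) such that |p^ε(x,v,z) - p⁰(x,v,z)| ≤ C e^{-ν₁ z} (ε|v|z + ε|v|z²) for all x, v, z, ε. -/
open MeasureTheory Real Set Filter

lemma abs_exp_neg_sub_exp_neg (a b : ℝ) :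
    |Real.exp (-a) - Real.exp (-b)| ≤ Real.exp (-(min a b)) * |a - b| := by
  wlog h : a ≤ b generalizing a b
  · rw [abs_sub_comm, abs_sub_comm a b, min_comm]
    exact this b a (le_of_not_ge h)
  rw [min_eq_left h, abs_of_nonneg (sub_nonneg.2 (Real.exp_le_exp.2 (neg_le_neg h))),
    abs_of_nonpos (sub_nonpos.2 h)]
  have h1 := Real.add_one_le_exp (a - b)
  have h2 : Real.exp (-b) = Real.exp (-a) * Real.exp (a - b) := by
    rw [← Real.exp_add]; ring_nf
  nlinarith [Real.exp_pos (-a)]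

theorem exit_time_kernel_perturbation_estimate
    (N : ℕ) (ν : EuclideanSpace ℝ (Fin N) → EuclideanSpace ℝ (Fin N) → ℝ)
    (ν₁ ν₂ M : ℝ) (hν₁ : 0 < ν₁)
    (hνbdd : ∀ x v, ν₁ ≤ ν x v ∧ ν x v ≤ ν₂)
    (hνdiff : ∀ v, Differentiable ℝ (fun x => ν x v))
    (hνlip : ∀ x v, ‖fderiv ℝ (fun y => ν y v) x‖ ≤ M) :
    ∃ C : ℝ, ∀ (x v : EuclideanSpace ℝ (Fin N)) (z ε : ℝ), 0 ≤ z → 0 < ε →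
      |Real.exp (-(∫ s in (0:ℝ)..z, ν (x + (ε * s) • v) v)) * ν (x + (ε * z) • v) v
        - Real.exp (-(z * ν x v)) * ν x v|
        ≤ C * Real.exp (-(ν₁ * z)) * (ε * ‖v‖ * z + ε * ‖v‖ * z ^ 2) := by
  have hM : 0 ≤ M := le_trans (norm_nonneg _) (hνlip 0 0)
  have hν₂ : 0 < ν₂ := lt_of_lt_of_le hν₁ ((hνbdd 0 0).1.trans (hνbdd 0 0).2)
  refine ⟨M * (1 + ν₂), fun x v z ε hz hε => ?_⟩
  -- Lipschitz bound
  have hlip : ∀ y₁ y₂ : EuclideanSpace ℝ (Fin N), |ν y₁ v - ν y₂ v| ≤ M * ‖y₁ - y₂‖ := by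
    intro y₁ y₂
    have := (convex_univ : Convex ℝ (univ : Set (EuclideanSpace ℝ (Fin N)))).norm_image_sub_le_of_norm_fderiv_le
      (fun y _ => (hνdiff v).differentiableAt) (fun y _ => hνlip y v) (mem_univ y₂) (mem_univ y₁)
    simpa [Real.norm_eq_abs] using this
  have hpt : ∀ s : ℝ, 0 ≤ s → |ν (x + (ε * s) • v) v - ν x v| ≤ M * (ε * ‖v‖) * s := by
    intro s hs
    have h := hlip (x + (ε * s) • v) x
    have : ‖x + (ε * s) • v - x‖ = ε * s * ‖v‖ := by
      rw [add_sub_cancel_left, norm_smul, Real.norm_eq_abs,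
        abs_of_nonneg (mul_nonneg hε.le hs)]
    rw [this] at h
    calc |ν (x + (ε * s) • v) v - ν x v| ≤ M * (ε * s * ‖v‖) := h
      _ = M * (ε * ‖v‖) * s := by ring
  have hcont : Continuous (fun s : ℝ => ν (x + (ε * s) • v) v) :=
    (hνdiff v).continuous.comp (by continuity)
  have hint : IntervalIntegrable (fun s : ℝ => ν (x + (ε * s) • v) v) volume 0 z :=
    hcont.intervalIntegrable 0 z
  set A := ∫ s in (0:ℝ)..z, ν (x + (ε * s) • v) v with hA
  set B := z * ν x v with hB
  -- A ≥ ν₁ z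
  have hAlb : ν₁ * z ≤ A := by
    have : (∫ _ in (0:ℝ)..z, ν₁) ≤ A :=
      intervalIntegral.integral_mono_on hz (intervalIntegrable_const) hint
        (fun s _ => (hνbdd _ v).1)
    simpa [mul_comm] using this
  have hBlb : ν₁ * z ≤ B := by
    rw [hB]; nlinarith [(hνbdd x v).1]
  -- |A - B| bound
  have hAB : |A - B| ≤ M * (ε * ‖v‖) * z ^ 2 / 2 := by
    have hsub : A - B = ∫ s in (0:ℝ)..z, (ν (x + (ε * s) • v) v - ν x v) := by
      rw [intervalIntegral.integral_sub hint intervalIntegrable_const,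
        intervalIntegral.integral_const]
      simp [hB, hA]
    rw [hsub]
    have h1 : |∫ s in (0:ℝ)..z, (ν (x + (ε * s) • v) v - ν x v)|
        ≤ ∫ s in (0:ℝ)..z, M * (ε * ‖v‖) * s := by
      apply intervalIntegral.abs_integral_le_integral_abs hz |>.trans
      · apply intervalIntegral.integral_mono_on hz
        · exact (hint.sub intervalIntegrable_const).abs
        · exact (continuous_const.mul continuous_id).intervalIntegrable 0 z
        · intro s hs; exact hpt s hs.1
    calc _ ≤ ∫ s in (0:ℝ)..z, M * (ε * ‖v‖) * s := h1
      _ = M * (ε * ‖v‖) * z ^ 2 / 2 := by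
        rw [intervalIntegral.integral_const_mul, integral_id]; ring
  -- pieces
  have hexp : |Real.exp (-A) - Real.exp (-B)| ≤ Real.exp (-(ν₁ * z)) * |A - B| := by
    refine (abs_exp_neg_sub_exp_neg A B).trans ?_
    have : Real.exp (-(min A B)) ≤ Real.exp (-(ν₁ * z)) :=
      Real.exp_le_exp.2 (neg_le_neg (le_min hAlb hBlb))
    exact mul_le_mul_of_nonneg_right this (abs_nonneg _)
  have hνz : |ν (x + (ε * z) • v) v - ν x v| ≤ M * (ε * ‖v‖) * z := hpt z hz
  have hBexp : Real.exp (-B) ≤ Real.exp (-(ν₁ * z)) := Real.exp_le_exp.2 (neg_le_neg hBlb)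
  have key : Real.exp (-A) * ν (x + (ε * z) • v) v - Real.exp (-B) * ν x v
      = (Real.exp (-A) - Real.exp (-B)) * ν (x + (ε * z) • v) v
        + Real.exp (-B) * (ν (x + (ε * z) • v) v - ν x v) := by ring
  rw [key]
  have hν2' : 0 < ν (x + (ε * z) • v) v := lt_of_lt_of_le hν₁ (hνbdd _ v).1
  have hνub := (hνbdd (x + (ε * z) • v) v).2
  have e1 : |(Real.exp (-A) - Real.exp (-B)) * ν (x + (ε * z) • v) v|
      ≤ Real.exp (-(ν₁ * z)) * (M * (ε * ‖v‖) * z ^ 2 / 2) * ν₂ := by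
    rw [abs_mul, abs_of_pos hν2']
    have h2 : |Real.exp (-A) - Real.exp (-B)| ≤ Real.exp (-(ν₁ * z)) * (M * (ε * ‖v‖) * z ^ 2 / 2) :=
      hexp.trans (mul_le_mul_of_nonneg_left hAB (Real.exp_pos _).le)
    exact mul_le_mul h2 hνub hν2'.le (by positivity)
  have e2 : |Real.exp (-B) * (ν (x + (ε * z) • v) v - ν x v)|
      ≤ Real.exp (-(ν₁ * z)) * (M * (ε * ‖v‖) * z) := by
    rw [abs_mul, abs_of_pos (Real.exp_pos _)]
    exact mul_le_mul hBexp hνz (abs_nonneg _) (Real.exp_pos _).le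
  calc |(Real.exp (-A) - Real.exp (-B)) * ν (x + (ε * z) • v) v
        + Real.exp (-B) * (ν (x + (ε * z) • v) v - ν x v)|
      ≤ Real.exp (-(ν₁ * z)) * (M * (ε * ‖v‖) * z ^ 2 / 2) * ν₂
        + Real.exp (-(ν₁ * z)) * (M * (ε * ‖v‖) * z) :=
        (abs_add_le _ _).trans (add_le_add e1 e2)
    _ ≤ M * (1 + ν₂) * Real.exp (-(ν₁ * z)) * (ε * ‖v‖ * z + ε * ‖v‖ * z ^ 2) := by
        have he := (Real.exp_pos (-(ν₁ * z))).le
        have hv := norm_nonneg v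
        nlinarith [sq_nonneg z, mul_nonneg (mul_nonneg hM hε.le) hv,
          mul_nonneg (mul_nonneg he (mul_nonneg (mul_nonneg hM hε.le) hv)) hz,
          mul_nonneg (mul_nonneg he (mul_nonneg (mul_nonneg hM hε.le) hv)) (sq_nonneg z)]
end
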